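/- Let U be a chain code all of whose prefixes have qturn in {-1, 0, 1} and with qturn(U) = 0, and let V be another such chain code. Then the concatenation U + V also has all prefixes with qturn in {-1, 0, 1}, qturn(U+V) = 0, and its unfolding dual path has pairwise distinct points. -/

import Mathlib

inductive TurnSym : Type
  | L | R | S
deriving DecidableEq

def qt : TurnSym → ℤ
  | TurnSym.L => -1
  | TurnSym.R => 1
  | TurnSym.S => 0

def qturn (U : List TurnSym) : ℤ := (U.map qt).sum

def rot : TurnSym → ℤ × ℤ → ℤ × ℤ
  | TurnSym.R, d => (d.2, -d.1)
  | TurnSym.L, d => (-d.2, d.1)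
  | TurnSym.S, d => d

def pathStep (s : (ℤ × ℤ) × (ℤ × ℤ)) (a : TurnSym) : (ℤ × ℤ) × (ℤ × ℤ) :=
  let d := rot a s.2
  (s.1 + d, d)

/-- Points p_0 = (0,0), p_1 = (0,1), ..., p_{n+1} of the unfolding dual path. -/
def pts (U : List TurnSym) : List (ℤ × ℤ) :=
  (0, 0) :: (List.scanl pathStep ((0, 1), (0, 1)) U).map Prod.fst

/-- 90° clockwise rotation. -/
def cw (d : ℤ × ℤ) : ℤ × ℤ := (d.2, -d.1)

/-- Final heading after processing a chain code from initial heading (0,1). -/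
def headAfter (U : List TurnSym) : ℤ × ℤ := U.foldl (fun d a => rot a d) (0, 1)

/-- Reflection of a chain code: swap L and R. -/
def reflCode (U : List TurnSym) : List TurnSym :=
  U.map fun a => match a with
    | TurnSym.L => TurnSym.R
    | TurnSym.R => TurnSym.L
    | TurnSym.S => TurnSym.S

/-- Action of a chain code on an arbitrary initial heading. -/
def act (U : List TurnSym) (d : ℤ × ℤ) : ℤ × ℤ := U.foldl (fun d a => rot a d) d

def st (W : List TurnSym) (k : ℕ) : (ℤ × ℤ) × (ℤ × ℤ) :=
  (W.take k).foldl pathStep ((0, 1), (0, 1))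

def pt (W : List TurnSym) : ℕ → ℤ × ℤ
  | 0 => (0, 0)
  | (k+1) => (st W k).1

def tn (W : List TurnSym) (k : ℕ) : ℤ := qturn (W.take k)

lemma qturn_append (A B : List TurnSym) : qturn (A ++ B) = qturn A + qturn B := by
  simp [qturn]

lemma qt_mem (a : TurnSym) : qt a = -1 ∨ qt a = 0 ∨ qt a = 1 := by
  cases a <;> simp [qt]

lemma st_succ (W : List TurnSym) {k : ℕ} (hk : k < W.length) :
    st W (k+1) = pathStep (st W k) W[k] := by
  unfold st
  rw [List.take_succ, List.getElem?_eq_getElem hk]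
  rw [Option.toList_some, List.foldl_append, List.foldl_cons, List.foldl_nil]

lemma tn_succ (W : List TurnSym) {k : ℕ} (hk : k < W.length) :
    tn W (k+1) = tn W k + qt W[k] := by
  unfold tn qturn
  rw [List.take_succ, List.getElem?_eq_getElem hk]
  rw [Option.toList_some, List.map_append, List.sum_append]
  simp

section

variable (W : List TurnSym) (hW : ∀ P, P <+: W → qturn P ∈ ({-1, 0, 1} : Set ℤ))

include hW

lemma tn_mem (k : ℕ) : tn W k = -1 ∨ tn W k = 0 ∨ tn W k = 1 := by
  have := hW (W.take k) (List.take_prefix k W)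
  simpa [Set.mem_insert_iff, tn] using this

lemma snd_st (k : ℕ) (hk : k ≤ W.length) :
    (st W k).2 = if tn W k = 0 then ((0:ℤ), (1:ℤ))
      else if tn W k = 1 then (1, 0) else (-1, 0) := by
  induction k with
  | zero => simp [st, tn, qturn]
  | succ k ih =>
    have hk' : k < W.length := hk
    have h1 := ih hk'.le
    rw [st_succ W hk', tn_succ W hk']
    rcases tn_mem W hW k with h | h | h <;>
      rcases tn_mem W hW (k+1) with h2 | h2 | h2 <;>
      rw [tn_succ W hk'] at h2 <;>
      cases hg : W[k] <;>
      simp_all [pathStep, rot, qt] <;> omega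

omit hW in
lemma pt_succ (k : ℕ) (hk : k ≤ W.length) :
    pt W (k+1) = pt W k + (st W k).2 := by
  cases k with
  | zero => simp [pt, st]
  | succ k =>
    have hk' : k < W.length := hk
    show (st W (k+1)).1 = (st W k).1 + (st W (k+1)).2
    rw [st_succ W hk']
    simp [pathStep]

lemma x_succ (k : ℕ) (hk : k ≤ W.length) :
    (pt W (k+1)).1 = (pt W k).1 + tn W k := by
  rw [pt_succ W k hk, snd_st W hW k hk]
  rcases tn_mem W hW k with h | h | h <;> simp [h, Prod.fst] <;> norm_num

lemma y_succ (k : ℕ) (hk : k ≤ W.length) :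
    (pt W (k+1)).2 = (pt W k).2 + (1 - (tn W k)^2) := by
  rw [pt_succ W k hk, snd_st W hW k hk]
  rcases tn_mem W hW k with h | h | h <;> simp [h] <;> norm_num

lemma y_mono {i j : ℕ} (hij : i ≤ j) (hj : j ≤ W.length + 1) :
    (pt W i).2 ≤ (pt W j).2 := by
  induction j, hij using Nat.le_induction with
  | base => exact le_refl _
  | succ j hij ih =>
    have hj' : j ≤ W.length := by omega
    have := ih (by omega)
    rw [y_succ W hW j hj']
    rcases tn_mem W hW j with h | h | h <;> simp [h] at * <;> omega

end


section

variable (W : List TurnSym) (hW : ∀ P, P <+: W → qturn P ∈ ({-1, 0, 1} : Set ℤ))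

include hW

lemma tn_ne_zero {i j k : ℕ} (hij : i ≤ j) (hj : j ≤ W.length + 1)
    (hy : (pt W i).2 = (pt W j).2) (hik : i ≤ k) (hkj : k < j) : tn W k ≠ 0 := by
  have hk : k ≤ W.length := by omega
  have h1 : (pt W i).2 ≤ (pt W k).2 := y_mono W hW hik (by omega)
  have h2 : (pt W (k+1)).2 ≤ (pt W j).2 := y_mono W hW (by omega) hj
  have h3 := y_succ W hW k hk
  intro h0
  rw [h0] at h3
  simp at h3
  omega

lemma tn_const {i j k : ℕ} (hij : i < j) (hj : j ≤ W.length + 1)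
    (hy : (pt W i).2 = (pt W j).2) (hik : i ≤ k) (hkj : k < j) : tn W k = tn W i := by
  induction k, hik using Nat.le_induction with
  | base => rfl
  | succ k hik ih =>
    have hk : k < W.length := by omega
    have h1 : tn W k = tn W i := ih (by omega)
    have h2 := tn_succ W hk
    have h3 : tn W k ≠ 0 := tn_ne_zero W hW hij.le hj hy hik (by omega)
    have h4 : tn W (k+1) ≠ 0 := tn_ne_zero W hW hij.le hj hy (by omega) hkj
    rcases tn_mem W hW k with h | h | h <;> rcases tn_mem W hW (k+1) with h' | h' | h' <;>
      rcases qt_mem W[k] with hq | hq | hq <;> omega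

lemma x_run {i j : ℕ} (hij : i < j) (hj : j ≤ W.length + 1)
    (hy : (pt W i).2 = (pt W j).2) :
    ∀ k, i ≤ k → k ≤ j → (pt W k).1 = (pt W i).1 + (k - i : ℤ) * tn W i := by
  intro k hik hkj
  induction k, hik using Nat.le_induction with
  | base => simp
  | succ k hik ih =>
    have hk : k ≤ W.length := by omega
    have h1 := ih (by omega)
    rw [x_succ W hW k hk, h1, tn_const W hW hij hj hy hik (by omega)]
    push_cast
    ring

lemma pt_inj {i j : ℕ} (hi : i ≤ W.length + 1) (hj : j ≤ W.length + 1)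
    (h : pt W i = pt W j) : i = j := by
  rcases lt_trichotomy i j with hij | hij | hij
  · exfalso
    have hy : (pt W i).2 = (pt W j).2 := by rw [h]
    have hx := x_run W hW hij hj hy j hij.le le_rfl
    have h3 : tn W i ≠ 0 := tn_ne_zero W hW hij.le hj hy le_rfl hij
    have : (pt W i).1 = (pt W j).1 := by rw [h]
    rcases tn_mem W hW i with ht | ht | ht <;> rw [ht] at hx <;> simp at hx <;> omega
  · exact hij
  · exfalso
    have hy : (pt W j).2 = (pt W i).2 := by rw [h]
    have hx := x_run W hW hij hi hy i hij.le le_rfl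
    have h3 : tn W j ≠ 0 := tn_ne_zero W hW hij.le hi hy le_rfl hij
    have : (pt W j).1 = (pt W i).1 := by rw [h]
    rcases tn_mem W hW j with ht | ht | ht <;> rw [ht] at hx <;> simp at hx <;> omega

end

lemma scanl_eq_map (W : List TurnSym) (s : (ℤ × ℤ) × (ℤ × ℤ)) :
    List.scanl pathStep s W
      = (List.range (W.length + 1)).map (fun k => (W.take k).foldl pathStep s) := by
  induction W generalizing s with
  | nil => simp
  | cons a W ih =>
    rw [List.scanl_cons, ih (pathStep s a)]
    conv_rhs => rw [show (a :: W).length + 1 = (W.length + 1) + 1 from rfl,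
      List.range_succ_eq_map]
    simp [List.map_map, Function.comp_def, List.take_succ_cons]

lemma pts_eq (W : List TurnSym) :
    pts W = (List.range (W.length + 2)).map (pt W) := by
  rw [pts, scanl_eq_map]
  conv_rhs => rw [show W.length + 2 = (W.length + 1) + 1 from rfl, List.range_succ_eq_map]
  simp [List.map_map, Function.comp_def, pt, st]

lemma pts_nodup (W : List TurnSym)
    (hW : ∀ P, P <+: W → qturn P ∈ ({-1, 0, 1} : Set ℤ)) : (pts W).Nodup := by
  rw [pts_eq]
  refine List.Nodup.map_on ?_ List.nodup_range
  intro i hi j hj h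
  rw [List.mem_range] at hi hj
  exact pt_inj W hW (by omega) (by omega) h


theorem stmt17 (U V : List TurnSym)
    (hU : ∀ P, P <+: U → qturn P ∈ ({-1, 0, 1} : Set ℤ)) (hU0 : qturn U = 0)
    (hV : ∀ P, P <+: V → qturn P ∈ ({-1, 0, 1} : Set ℤ)) (hV0 : qturn V = 0) :
    (∀ P, P <+: U ++ V → qturn P ∈ ({-1, 0, 1} : Set ℤ)) ∧
    qturn (U ++ V) = 0 ∧
    (pts (U ++ V)).Nodup := by
  have key : ∀ P, P <+: U ++ V → qturn P ∈ ({-1, 0, 1} : Set ℤ) := by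
    intro P hP
    by_cases hlen : P.length ≤ U.length
    · exact hU P ((List.isPrefix_append_of_length hlen).mp hP)
    · have hPt := List.prefix_iff_eq_take.mp hP
      rw [List.take_append, List.take_of_length_le (by omega)] at hPt
      rw [hPt, qturn_append, hU0, zero_add]
      exact hV _ (List.take_prefix _ _)
  refine ⟨key, ?_, pts_nodup _ key⟩
  rw [qturn_append, hU0, hV0, add_zero]
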